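/- Let $n \ge 2$ be an integer and $p$ an odd prime. Let $V \subseteq \mathbb{F}_{p^{2n}}$ be an $\mathbb{F}_p$-subspace of dimension $n$ with $1 \in V$ and $V \ne \mathbb{F}_{p^n}$. Then there exists $v \in V$ such that $v$ does not lie in any proper subfield of $\mathbb{F}_{p^{2n}}$. -/
import Mathlib

open Finset Polynomial

-- auxiliary: geometric sum bound
lemma aux_geom (p : ℕ) (hp : 3 ≤ p) : ∀ n : ℕ, 2 * ∑ e ∈ range n, p ^ e ≤ p ^ n + 1 := by
  intro n
  induction n with
  | zero => simp
  | succ n ih =>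
    rw [Finset.sum_range_succ, pow_succ]
    have : 3 * p ^ n ≤ p ^ n * p := by
      rw [mul_comm]; exact Nat.mul_le_mul_left _ hp
    omega

-- number of solutions of x^q = x is at most q (q ≥ 2)
lemma aux_card_sol (F : Type*) [Field F] [Fintype F] [DecidableEq F] (q : ℕ) (hq : 2 ≤ q) :
    (Finset.univ.filter (fun x : F => x ^ q = x)).card ≤ q := by
  classical
  have hpoly : (X ^ q - X : F[X]) ≠ 0 := by
    intro h
    have := congrArg (fun f => Polynomial.coeff f q) h
    simp only [Polynomial.coeff_sub, Polynomial.coeff_X_pow, Polynomial.coeff_X,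
      Polynomial.coeff_zero, if_pos rfl] at this
    rw [if_neg (by omega : ¬ (1 : ℕ) = q)] at this
    simp at this
  have hdeg : (X ^ q - X : F[X]).natDegree = q := by
    rw [Polynomial.natDegree_sub_eq_left_of_natDegree_lt]
    · simp [Polynomial.natDegree_X_pow]
    · simp only [Polynomial.natDegree_X, Polynomial.natDegree_X_pow]
      omega
  have hsub : (Finset.univ.filter (fun x : F => x ^ q = x)) ⊆ (X ^ q - X : F[X]).roots.toFinset := by
    intro x hx
    simp only [Finset.mem_filter] at hx
    rw [Multiset.mem_toFinset, Polynomial.mem_roots hpoly]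
    simp [Polynomial.IsRoot, sub_eq_zero, hx.2]
  calc (Finset.univ.filter (fun x : F => x ^ q = x)).card
      ≤ (X ^ q - X : F[X]).roots.toFinset.card := Finset.card_le_card hsub
    _ ≤ Multiset.card (X ^ q - X : F[X]).roots := Multiset.toFinset_card_le _
    _ ≤ (X ^ q - X : F[X]).natDegree := Polynomial.card_roots' _
    _ = q := hdeg

theorem stmt2 (n p : ℕ) (hn : 2 ≤ n) (hp : p.Prime) (hodd : Odd p)
    (F : Type*) [Field F] [Fintype F] [Algebra (ZMod p) F]
    (hF : Fintype.card F = p ^ (2 * n))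
    (V : Submodule (ZMod p) F)
    (hdim : Module.finrank (ZMod p) V = n)
    (h1 : (1 : F) ∈ V)
    (hV : (V : Set F) ≠ {x : F | x ^ (p ^ n) = x}) :
    ∃ v ∈ V, ∀ K : Subfield F, K ≠ ⊤ → v ∉ K := by
  classical
  haveI := Fact.mk hp
  haveI hcharF : CharP F p := charP_of_injective_algebraMap (algebraMap (ZMod p) F).injective p
  have hp3 : 3 ≤ p := by
    rcases hp.eq_two_or_odd' with h2 | _
    · exact absurd (h2 ▸ hodd) (by decide)
    · have := hp.two_le; rcases Nat.lt_or_ge p 3 with h | h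
      · interval_cases p
        · exact absurd hodd (by decide)
      · exact h
  -- card of V
  have hcardV : Fintype.card V = p ^ n := by
    rw [Module.card_eq_pow_finrank (K := ZMod p) (V := V), ZMod.card, hdim]
  by_contra hcon
  push_neg at hcon
  haveI : Module.Finite (ZMod p) F := Module.finite_iff_finite.mpr inferInstance
  have hq2 : 2 ≤ p ^ n := le_trans hp.two_le (Nat.le_self_pow (by omega) p)
  -- the submodule of solutions of x^q = x
  let W : Submodule (ZMod p) F :=
  { carrier := {x : F | x ^ p ^ n = x}
    add_mem' := fun {a b} ha hb => by
      simp only [Set.mem_setOf_eq] at *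
      rw [add_pow_char_pow, ha, hb]
    zero_mem' := by
      simp only [Set.mem_setOf_eq]
      exact zero_pow (by positivity)
    smul_mem' := fun c x hx => by
      simp only [Set.mem_setOf_eq] at *
      rw [Algebra.smul_def, mul_pow, hx, ← map_pow, ZMod.pow_card_pow] }
  -- finsets
  let TV : Finset F := univ.filter (fun x => x ∈ V)
  let S : ℕ → Finset F := fun e => univ.filter (fun x : F => x ^ p ^ e = x)
  have hTV : TV.card = p ^ n := by
    rw [← hcardV]
    exact (Fintype.card_of_subtype TV (fun x => by simp [TV])).symm
  -- V is not contained in W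
  have hVW : ¬ V ≤ W := by
    intro hle
    apply hV
    have hsub : TV ⊆ S n := by
      intro x hx
      simp only [TV, mem_filter, mem_univ, true_and] at hx
      simp only [S, mem_filter, mem_univ, true_and]
      exact hle hx
    have hle' : (S n).card ≤ TV.card := by
      rw [hTV]; exact aux_card_sol F (p ^ n) hq2
    have heq : TV = S n := Finset.eq_of_subset_of_card_le hsub hle'
    ext x
    constructor
    · intro hx
      have hx' : x ∈ V := hx
      have : x ∈ S n := heq ▸ (by simp [TV, hx'] : x ∈ TV)
      simpa [S] using this
    · intro hx
      have hx' : x ^ p ^ n = x := hx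
      have : x ∈ TV := heq ▸ (by simpa [S] using hx' : x ∈ S n)
      simpa [TV] using this
  have hlt : V ⊓ W < V := lt_of_le_of_ne inf_le_left (fun h => hVW (h ▸ inf_le_right))
  have hfr : Module.finrank (ZMod p) ↥(V ⊓ W) < n := by
    rw [← hdim]; exact Submodule.finrank_lt_finrank_of_lt hlt
  have hcardVW : Fintype.card ↥(V ⊓ W) ≤ p ^ (n - 1) := by
    rw [Module.card_eq_pow_finrank (K := ZMod p), ZMod.card]
    exact Nat.pow_le_pow_right hp.pos (by omega)
  let A : Finset F := univ.filter (fun x => x ∈ V ∧ x ^ p ^ n = x)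
  have hAcard : A.card ≤ p ^ (n - 1) := by
    have e1 : Fintype.card {x : F // x ∈ V ∧ x ^ p ^ n = x} = A.card :=
      Fintype.card_of_subtype A (fun x => by simp [A])
    have e2 : Fintype.card ↥(V ⊓ W) = Fintype.card {x : F // x ∈ V ∧ x ^ p ^ n = x} :=
      Fintype.card_congr (Equiv.subtypeEquivRight (fun x => by
        rw [Submodule.mem_inf]; exact Iff.rfl))
    calc A.card = Fintype.card {x : F // x ∈ V ∧ x ^ p ^ n = x} := e1.symm
      _ = Fintype.card ↥(V ⊓ W) := e2.symm
      _ ≤ p ^ (n - 1) := hcardVW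
  -- every element of V lies in A or in some S e with 1 ≤ e < n
  have hcover : TV ⊆ A ∪ (Finset.Ico 1 n).biUnion S := by
    intro v hv
    have hvV : v ∈ V := by simpa [TV] using hv
    obtain ⟨K, hKtop, hvK⟩ := hcon v hvV
    haveI : Fintype K := Fintype.ofFinite _
    haveI : CharP K p := (K.subtype).charP K.subtype.injective p
    obtain ⟨d, -, hd⟩ := FiniteField.card (K := K) p
    set m := Module.finrank K F with hm
    have hcards : Fintype.card F = Fintype.card K ^ m := Module.card_eq_pow_finrank
    have hpow : p ^ (2 * n) = p ^ ((d : ℕ) * m) := by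
      rw [← hF, hcards, hd, ← pow_mul]
    have hdm : (d : ℕ) * m = 2 * n := (Nat.pow_right_injective hp.two_le hpow).symm
    have hm1 : m ≠ 1 := by
      intro h
      apply hKtop
      have hce : Fintype.card K = Fintype.card F := by rw [hcards, h, pow_one]
      rw [eq_top_iff]
      intro x _
      have hsurj : Function.Surjective (K.subtype) :=
        ((Fintype.bijective_iff_injective_and_card _).2
          ⟨K.subtype.injective, hce⟩).2
      obtain ⟨y, hy⟩ := hsurj x
      rw [← hy]; exact y.2
    have hm0 : m ≠ 0 := by
      intro h; rw [h, mul_zero] at hdm; omega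
    have hdn : (d : ℕ) ≤ n := by
      have : (d : ℕ) * 2 ≤ (d : ℕ) * m := Nat.mul_le_mul_left _ (by omega)
      omega
    have hd1 : 1 ≤ (d : ℕ) := d.2
    have hvpow : v ^ p ^ (d : ℕ) = v := by
      have h0 := FiniteField.pow_card (⟨v, hvK⟩ : K)
      rw [hd] at h0
      have h1' := congrArg (Subtype.val) h0
      simpa using h1'
    rcases eq_or_lt_of_le hdn with heq | hlt'
    · apply Finset.mem_union_left
      simp only [A, mem_filter, mem_univ, true_and]
      exact ⟨hvV, by rw [← heq]; exact hvpow⟩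
    · apply Finset.mem_union_right
      rw [Finset.mem_biUnion]
      exact ⟨(d : ℕ), Finset.mem_Ico.2 ⟨hd1, hlt'⟩, by
        simp only [S, mem_filter, mem_univ, true_and]; exact hvpow⟩
  have hcount : TV.card ≤ A.card + ∑ e ∈ Finset.Ico 1 n, p ^ e := by
    calc TV.card ≤ (A ∪ (Finset.Ico 1 n).biUnion S).card := Finset.card_le_card hcover
      _ ≤ A.card + ((Finset.Ico 1 n).biUnion S).card := Finset.card_union_le _ _
      _ ≤ A.card + ∑ e ∈ Finset.Ico 1 n, (S e).card := by
          gcongr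
          exact Finset.card_biUnion_le
      _ ≤ A.card + ∑ e ∈ Finset.Ico 1 n, p ^ e := by
          gcongr with e he
          rw [Finset.mem_Ico] at he
          exact aux_card_sol F _ (le_trans hp.two_le
            (Nat.le_self_pow (by omega : e ≠ 0) p))
  have hsum : 1 + ∑ e ∈ Finset.Ico 1 n, p ^ e = ∑ e ∈ Finset.range n, p ^ e := by
    rw [Finset.range_eq_Ico, Finset.sum_eq_sum_Ico_succ_bot (by omega : 0 < n), pow_zero]
  have hgeo := aux_geom p hp3 n
  have h3 : 3 * p ^ (n - 1) ≤ p ^ n := by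
    have : p ^ n = p ^ (n - 1) * p := by
      rw [← pow_succ]; congr 1; omega
    have h4 : p ^ (n - 1) * 3 ≤ p ^ (n - 1) * p := Nat.mul_le_mul_left _ hp3
    omega
  omega
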